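/- arXiv:1702.01282 — 2 statements merged into one kernel-verified Lean document; each statement's English description precedes it below -/
import Mathlib

section
/- The map which assigns to each totally isotropic 2-plane x in ℝ^{2,n+2} the unique pair (v_1, v_2) of vectors in ℝ^{n+2} such that {f_1 + v_1, f_2 + v_2} is a basis of x, is a well-defined bijection from the space of totally isotropic 2-dimensional subspaces of ℝ^{2,n+2} onto the Stiefel manifold V_2(ℝ^{n+2}) of orthonormal 2-frames in ℝ^{n+2}. -/
open Finset Submodule Module

/-- Let `ℝ^{2,n+2} = ℝ² ⊕ ℝ^{n+2}` carry the symmetric bilinear form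
`h((x,u),(y,v)) = -⟨x,y⟩ + ⟨u,v⟩` (negative definite on `ℝ²` with orthonormal basis
`f₁ = (e₁,0), f₂ = (e₂,0)`, positive definite on `ℝ^{n+2}`).  The map assigning to each
totally isotropic 2-plane `x` in `ℝ^{2,n+2}` the unique pair `(v₁, v₂)` of vectors of
`ℝ^{n+2}` such that `{f₁ + v₁, f₂ + v₂}` is a basis of `x` is a well-defined bijection from
the totally isotropic 2-dimensional subspaces of `ℝ^{2,n+2}` onto the Stiefel manifold
`V₂(ℝ^{n+2})` of orthonormal 2-frames in `ℝ^{n+2}`: the spanning pair exists, is unique, is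
an orthonormal 2-frame, and conversely every orthonormal 2-frame arises from a unique
totally isotropic 2-plane this way. -/
theorem isotropic_two_planes_biject_with_stiefel (n : ℕ) :
    (∀ x : Submodule ℝ ((Fin 2 → ℝ) × (Fin (n + 2) → ℝ)),
      Module.finrank ℝ x = 2 →
      (∀ u ∈ x, ∀ v ∈ x,
        -(∑ i, u.1 i * v.1 i) + ∑ i, u.2 i * v.2 i = (0 : ℝ)) →
      (∃! p : (Fin (n + 2) → ℝ) × (Fin (n + 2) → ℝ),
        Submodule.span ℝ
          {((Pi.single 0 1 : Fin 2 → ℝ), p.1), ((Pi.single 1 1 : Fin 2 → ℝ), p.2)} = x) ∧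
      (∀ p : (Fin (n + 2) → ℝ) × (Fin (n + 2) → ℝ),
        Submodule.span ℝ
          {((Pi.single 0 1 : Fin 2 → ℝ), p.1), ((Pi.single 1 1 : Fin 2 → ℝ), p.2)} = x →
        (∑ i, p.1 i * p.1 i) = 1 ∧ (∑ i, p.2 i * p.2 i) = 1 ∧ (∑ i, p.1 i * p.2 i) = 0)) ∧
    (∀ p : (Fin (n + 2) → ℝ) × (Fin (n + 2) → ℝ),
      (∑ i, p.1 i * p.1 i) = 1 → (∑ i, p.2 i * p.2 i) = 1 → (∑ i, p.1 i * p.2 i) = 0 →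
      Module.finrank ℝ
        ↥(Submodule.span ℝ
          {((Pi.single 0 1 : Fin 2 → ℝ), p.1), ((Pi.single 1 1 : Fin 2 → ℝ), p.2)}) = 2 ∧
      (∀ u ∈ Submodule.span ℝ
          {((Pi.single 0 1 : Fin 2 → ℝ), p.1), ((Pi.single 1 1 : Fin 2 → ℝ), p.2)},
       ∀ v ∈ Submodule.span ℝ
          {((Pi.single 0 1 : Fin 2 → ℝ), p.1), ((Pi.single 1 1 : Fin 2 → ℝ), p.2)},
        -(∑ i, u.1 i * v.1 i) + ∑ i, u.2 i * v.2 i = (0 : ℝ))) := by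
  constructor
  · intro x hrank hiso
    -- elements of x with zero first component are zero
    have key : ∀ u ∈ x, u.1 = 0 → u = 0 := by
      intro u hu h1
      have h := hiso u hu u hu
      rw [h1] at h
      simp only [Pi.zero_apply, mul_zero, Finset.sum_const_zero, neg_zero, zero_add] at h
      have h2 : u.2 = 0 := by
        funext i
        have := (Finset.sum_eq_zero_iff_of_nonneg
          (fun j _ => mul_self_nonneg (u.2 j))).mp h i (Finset.mem_univ i)
        exact mul_self_eq_zero.mp this
      exact Prod.ext h1 h2
    -- the projection to the first factor, restricted to x
    set f : x →ₗ[ℝ] (Fin 2 → ℝ) := (LinearMap.fst ℝ _ _).comp x.subtype with hf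
    have hinj : Function.Injective f := by
      rw [← LinearMap.ker_eq_bot]
      ext u
      simp only [LinearMap.mem_ker, Submodule.mem_bot]
      constructor
      · intro hu
        have : (u : (Fin 2 → ℝ) × (Fin (n + 2) → ℝ)) = 0 := key u u.2 hu
        exact Subtype.ext this
      · rintro rfl; simp [hf]
    have hsurj : Function.Surjective f := by
      rw [← LinearMap.range_eq_top]
      apply Submodule.eq_top_of_finrank_eq
      rw [LinearMap.finrank_range_of_inj hinj, hrank]
      simp
    obtain ⟨a, ha1⟩ := hsurj (Pi.single 0 1)
    obtain ⟨b, hb1⟩ := hsurj (Pi.single 1 1)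
    have ha1' : (a : (Fin 2 → ℝ) × (Fin (n + 2) → ℝ)).1 = Pi.single 0 1 := ha1
    have hb1' : (b : (Fin 2 → ℝ) × (Fin (n + 2) → ℝ)).1 = Pi.single 1 1 := hb1
    have haeq : ((Pi.single 0 1 : Fin 2 → ℝ), (a : (Fin 2 → ℝ) × (Fin (n + 2) → ℝ)).2)
        = (a : (Fin 2 → ℝ) × (Fin (n + 2) → ℝ)) := by
      rw [← ha1']
    have hbeq : ((Pi.single 1 1 : Fin 2 → ℝ), (b : (Fin 2 → ℝ) × (Fin (n + 2) → ℝ)).2)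
        = (b : (Fin 2 → ℝ) × (Fin (n + 2) → ℝ)) := by
      rw [← hb1']
    -- the span of a, b is x
    have hspan : Submodule.span ℝ
        {((Pi.single 0 1 : Fin 2 → ℝ), (a : (Fin 2 → ℝ) × (Fin (n + 2) → ℝ)).2),
         ((Pi.single 1 1 : Fin 2 → ℝ), (b : (Fin 2 → ℝ) × (Fin (n + 2) → ℝ)).2)} = x := by
      rw [haeq, hbeq]
      apply le_antisymm
      · rw [Submodule.span_le]
        rintro v (rfl | rfl)
        · exact a.2
        · exact b.2
      · intro u hu
        have hmem : u - u.1 0 • (a : (Fin 2 → ℝ) × (Fin (n + 2) → ℝ))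
            - u.1 1 • (b : (Fin 2 → ℝ) × (Fin (n + 2) → ℝ)) ∈ x :=
          Submodule.sub_mem x (Submodule.sub_mem x hu (Submodule.smul_mem x _ a.2))
            (Submodule.smul_mem x _ b.2)
        have h1 : (u - u.1 0 • (a : (Fin 2 → ℝ) × (Fin (n + 2) → ℝ))
            - u.1 1 • (b : (Fin 2 → ℝ) × (Fin (n + 2) → ℝ))).1 = 0 := by
          have hdef : (u - u.1 0 • (a : (Fin 2 → ℝ) × (Fin (n + 2) → ℝ))
              - u.1 1 • (b : (Fin 2 → ℝ) × (Fin (n + 2) → ℝ))).1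
              = u.1 - u.1 0 • (a : (Fin 2 → ℝ) × (Fin (n + 2) → ℝ)).1
                - u.1 1 • (b : (Fin 2 → ℝ) × (Fin (n + 2) → ℝ)).1 := rfl
          rw [hdef, ha1', hb1']
          funext i
          fin_cases i <;> simp [Pi.single_apply]
        have h0 := key _ hmem h1
        have : u = u.1 0 • (a : (Fin 2 → ℝ) × (Fin (n + 2) → ℝ))
            + u.1 1 • (b : (Fin 2 → ℝ) × (Fin (n + 2) → ℝ)) := by
          rw [sub_sub, sub_eq_zero] at h0
          exact h0
        rw [this]
        exact Submodule.mem_span_pair.mpr ⟨u.1 0, u.1 1, rfl⟩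
    refine ⟨⟨((a : (Fin 2 → ℝ) × (Fin (n + 2) → ℝ)).2,
        (b : (Fin 2 → ℝ) × (Fin (n + 2) → ℝ)).2), hspan, ?_⟩, ?_⟩
    · -- uniqueness
      rintro ⟨q1, q2⟩ hq
      have hq1 : ((Pi.single 0 1 : Fin 2 → ℝ), q1) ∈ x := by
        rw [← hq]; exact Submodule.subset_span (by simp)
      have hq2 : ((Pi.single 1 1 : Fin 2 → ℝ), q2) ∈ x := by
        rw [← hq]; exact Submodule.subset_span (by simp)
      have e1 : ((Pi.single 0 1 : Fin 2 → ℝ), q1)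
          - ((Pi.single 0 1 : Fin 2 → ℝ), (a : (Fin 2 → ℝ) × (Fin (n + 2) → ℝ)).2) = 0 := by
        apply key _ (Submodule.sub_mem x hq1 (haeq ▸ a.2))
        simp
      have e2 : ((Pi.single 1 1 : Fin 2 → ℝ), q2)
          - ((Pi.single 1 1 : Fin 2 → ℝ), (b : (Fin 2 → ℝ) × (Fin (n + 2) → ℝ)).2) = 0 := by
        apply key _ (Submodule.sub_mem x hq2 (hbeq ▸ b.2))
        simp
      have := sub_eq_zero.mp e1
      have := sub_eq_zero.mp e2
      simp only [Prod.mk.injEq] at *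
      exact ⟨by tauto, by tauto⟩
    · -- orthonormality
      rintro ⟨q1, q2⟩ hq
      have hq1 : ((Pi.single 0 1 : Fin 2 → ℝ), q1) ∈ x := by
        rw [← hq]; exact Submodule.subset_span (by simp)
      have hq2 : ((Pi.single 1 1 : Fin 2 → ℝ), q2) ∈ x := by
        rw [← hq]; exact Submodule.subset_span (by simp)
      have h11 := hiso _ hq1 _ hq1
      have h22 := hiso _ hq2 _ hq2
      have h12 := hiso _ hq1 _ hq2
      simp only [Fin.sum_univ_two, Pi.single_apply] at h11 h22 h12
      norm_num at h11 h22 h12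
      exact ⟨by linarith, by linarith, by linarith⟩
  · rintro ⟨p1, p2⟩ h1 h2 h12
    constructor
    · have hli : LinearIndependent ℝ
          ![((Pi.single 0 1 : Fin 2 → ℝ), p1), ((Pi.single 1 1 : Fin 2 → ℝ), p2)] := by
        rw [LinearIndependent.pair_iff]
        intro s t hst
        have h0 := congrArg (fun v => v.1 0) hst
        have h1' := congrArg (fun v => v.1 1) hst
        simp [Pi.single_apply] at h0 h1'
        exact ⟨h0, h1'⟩
      have := finrank_span_eq_card (R := ℝ) hli
      rwa [show Set.range ![((Pi.single 0 1 : Fin 2 → ℝ), p1),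
          ((Pi.single 1 1 : Fin 2 → ℝ), p2)]
          = {((Pi.single 0 1 : Fin 2 → ℝ), p1), ((Pi.single 1 1 : Fin 2 → ℝ), p2)} from
        Matrix.range_cons_cons_empty _ _ _, Fintype.card_fin] at this
    · intro u hu v hv
      obtain ⟨c, d, hcd⟩ := Submodule.mem_span_pair.mp hu
      obtain ⟨c', d', hcd'⟩ := Submodule.mem_span_pair.mp hv
      subst hcd hcd'
      simp only [Prod.fst_add, Prod.snd_add, Prod.smul_mk, Prod.smul_fst, Prod.smul_snd,
        Pi.add_apply, Pi.smul_apply, smul_eq_mul, Fin.sum_univ_two, Pi.single_apply]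
      have e2 : ∑ i, (c * p1 i + d * p2 i) * (c' * p1 i + d' * p2 i)
          = c * c' * ∑ i, p1 i * p1 i + (c * d' + d * c') * ∑ i, p1 i * p2 i
            + d * d' * ∑ i, p2 i * p2 i := by
        simp_rw [Finset.mul_sum, ← Finset.sum_add_distrib]
        apply Finset.sum_congr rfl
        intro i _
        ring
      rw [e2, h1, h2, h12]
      norm_num
end

section
/- Let H̃ be the group obtained as the quotient of {(e^{it}, e^{is}, a) ∈ U(1) × U(1) × Spin(n) : e^{it} = ±e^{is}} by the normal subgroup generated by (-1,-1,1) and (-1,1,-1). Then the map ⟨e^{it}, e^{is}, a⟩ ↦ (e^{2is}, e^{i(t-s)} a) is a well-defined Lie group isomorphism H̃ → SO(2) × Spin(n), with inverse (e^{is}, a) ↦ ⟨e^{is/2}, e^{is/2}, a⟩. -/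
/-- The element `-1` of the circle group `U(1)`. -/
def negOne : Circle := ⟨-1, by simp [Submonoid.unitSphere, mem_sphere_zero_iff_norm]⟩

lemma negOne_mul_negOne : negOne * negOne = 1 := by
  apply Subtype.ext
  simp [negOne]
  show ((-1 : ℂ) * (-1)) = 1
  norm_num

lemma negOne_inv : negOne⁻¹ = negOne := by
  rw [inv_eq_iff_mul_eq_one, negOne_mul_negOne]

/-- The subgroup `{(e^{it}, e^{is}, a) ∈ U(1) × U(1) × Spin(n) : e^{it} = ±e^{is}}`. -/
noncomputable def pmSubgroup (Spin : Type) [Group Spin] : Subgroup (Circle × Circle × Spin) where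
  carrier := {x | x.1 = x.2.1 ∨ x.1 = negOne * x.2.1}
  one_mem' := Or.inl rfl
  mul_mem' := by
    intro x y hx hy
    obtain ⟨z, w, a⟩ := x
    obtain ⟨z', w', a'⟩ := y
    simp only [Set.mem_setOf_eq] at hx hy ⊢
    simp only [Prod.mk_mul_mk] at hx hy ⊢
    obtain h | h := hx <;> obtain h' | h' := hy <;> subst h <;> subst h'
    · exact Or.inl rfl
    · right; rw [mul_left_comm]
    · right; rw [mul_assoc]
    · left; rw [mul_mul_mul_comm, negOne_mul_negOne, one_mul]
  inv_mem' := by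
    intro x hx
    obtain ⟨z, w, a⟩ := x
    simp only [Set.mem_setOf_eq] at hx ⊢
    simp only [Prod.inv_mk] at hx ⊢
    obtain h | h := hx <;> subst h
    · exact Or.inl rfl
    · right; rw [mul_inv_rev, negOne_inv, mul_comm]

lemma negOne_ne_one : negOne ≠ 1 := by
  intro h
  have h2 := congrArg Subtype.val h
  exact absurd h2 (by norm_num [negOne])

lemma negOne_sq : negOne ^ 2 = 1 := by rw [sq, negOne_mul_negOne]

lemma circle_sq_eq_one {w : Circle} (h : w ^ 2 = 1) : w = 1 ∨ w = negOne := by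
  have h' : ((w ^ 2 : Circle) : ℂ) = 1 := by rw [h]; rfl
  push_cast at h'
  rcases sq_eq_one_iff.mp h' with h1 | h1
  · left; exact Subtype.ext h1
  · right; exact Subtype.ext (h1.trans rfl)

section Aux

variable (Spin : Type) [Group Spin] (m : Spin)

open Classical in
/-- `1 ↦ 1`, anything else (in particular `-1`) `↦ m`. -/
noncomputable def dmap : Circle → Spin := fun x => if x = 1 then 1 else m

lemma dmap_one : dmap Spin m 1 = 1 := by simp [dmap]

lemma dmap_negOne : dmap Spin m negOne = m := by simp [dmap, negOne_ne_one]

variable (hmc : m ∈ Subgroup.center Spin) (hm2 : m ^ 2 = 1)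

/-- The homomorphism `(z, w, a) ↦ (w², d(z w⁻¹) a)`. -/
noncomputable def stabHom : ↥(pmSubgroup Spin) →* Circle × Spin where
  toFun x := (x.1.2.1 ^ 2, dmap Spin m (x.1.1 * x.1.2.1⁻¹) * x.1.2.2)
  map_one' := by simp [dmap_one]
  map_mul' := by
    rintro ⟨⟨z, w, a⟩, hx⟩ ⟨⟨z', w', a'⟩, hy⟩
    have hcent := Subgroup.mem_center_iff.mp hmc
    have hx' : z = w ∨ z = negOne * w := hx
    have hy' : z' = w' ∨ z' = negOne * w' := hy
    have c1 : ∀ u : Circle, u * u⁻¹ = 1 := fun u => mul_inv_cancel u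
    have c2 : ∀ u : Circle, negOne * u * u⁻¹ = negOne := fun u => by
      rw [mul_assoc, mul_inv_cancel, mul_one]
    have c3 : ∀ u v : Circle, u * (negOne * v) * (u * v)⁻¹ = negOne := fun u v => by
      rw [mul_left_comm, mul_assoc, mul_inv_cancel, mul_one]
    have c4 : ∀ u v : Circle, negOne * u * v * (u * v)⁻¹ = negOne := fun u v => by
      rw [mul_assoc negOne, mul_assoc, mul_inv_cancel, mul_one]
    have c5 : ∀ u v : Circle, negOne * u * (negOne * v) * (u * v)⁻¹ = 1 := fun u v => by
      rw [mul_mul_mul_comm, negOne_mul_negOne, one_mul, mul_inv_cancel]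
    dsimp only [MulMemClass.mk_mul_mk, Prod.mk_mul_mk]
    rw [Prod.mk.injEq]
    refine ⟨mul_pow w w' 2, ?_⟩
    obtain rfl | rfl := hx' <;> obtain rfl | rfl := hy'
    · rw [c1, c1, c1, dmap_one, one_mul, one_mul, one_mul]
    · rw [c3, c1, c2, dmap_one, dmap_negOne, one_mul,
        ← mul_assoc, ← hcent a, mul_assoc]
    · rw [c4, c1, c2, dmap_one, dmap_negOne, one_mul, mul_assoc]
    · rw [c5, c2, c2, dmap_one, dmap_negOne, one_mul,
        mul_assoc m a, ← mul_assoc a m a', hcent a, ← mul_assoc, ← mul_assoc,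
        ← sq, hm2, one_mul]

end Aux

/-- Let `Spin` model `Spin(n)` (`n ≥ 3`) with central element `m = -1 ≠ 1`
of order two.  Let `H̃` be the quotient of
`{(e^{it}, e^{is}, a) ∈ U(1) × U(1) × Spin(n) : e^{it} = ±e^{is}}` by the normal subgroup
generated by `(-1,-1,1)` and `(-1,1,-1)`.  Then the map
`⟨e^{it}, e^{is}, a⟩ ↦ (e^{2is}, e^{i(t-s)}·a)` (which sends `⟨w, w, a⟩ ↦ (w², a)` and
`⟨-w, w, a⟩ ↦ (w², -a)`) is a well-defined group isomorphism `H̃ → SO(2) × Spin(n)`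
(with `SO(2)` identified with `U(1)` via `ρ₂(e^{is}) = e^{2is}`), whose inverse is
`(e^{is}, a) ↦ ⟨e^{is/2}, e^{is/2}, a⟩`. -/
theorem stabilizer_group_iso_so2_times_spin
    (Spin : Type) [Group Spin]
    (m : Spin) (hmc : m ∈ Subgroup.center Spin) (hm1 : m ≠ 1) (hm2 : m ^ 2 = 1) :
    ∃ f : ↥(pmSubgroup Spin) ⧸
        Subgroup.normalClosure
          {(⟨(negOne, negOne, 1), Or.inl rfl⟩ : ↥(pmSubgroup Spin)),
           (⟨(negOne, 1, m), Or.inr (by rw [mul_one])⟩ : ↥(pmSubgroup Spin))} →*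
        Circle × Spin,
      (∀ (w : Circle) (a : Spin),
        f (QuotientGroup.mk ⟨(w, w, a), Or.inl rfl⟩) = (w ^ 2, a)) ∧
      (∀ (w : Circle) (a : Spin),
        f (QuotientGroup.mk ⟨(negOne * w, w, a), Or.inr rfl⟩) = (w ^ 2, m * a)) ∧
      Function.Bijective f := by
  have hcent := Subgroup.mem_center_iff.mp hmc
  have hminv : m⁻¹ = m := by
    rw [inv_eq_iff_mul_eq_one, ← sq, hm2]
  have hker : Subgroup.normalClosure
      {(⟨(negOne, negOne, 1), Or.inl rfl⟩ : ↥(pmSubgroup Spin)),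
       (⟨(negOne, 1, m), Or.inr (by rw [mul_one])⟩ : ↥(pmSubgroup Spin))} ≤
      (stabHom Spin m hmc hm2).ker := by
    apply Subgroup.normalClosure_le_normal
    rintro x (rfl | rfl)
    · rw [SetLike.mem_coe, MonoidHom.mem_ker]
      apply Prod.ext
      · exact negOne_sq
      · show dmap Spin m (negOne * negOne⁻¹) * (1 : Spin) = 1
        rw [negOne_inv, negOne_mul_negOne, dmap_one, one_mul]
    · rw [SetLike.mem_coe, MonoidHom.mem_ker]
      apply Prod.ext
      · exact one_pow 2
      · show dmap Spin m (negOne * (1 : Circle)⁻¹) * m = 1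
        rw [inv_one, mul_one, dmap_negOne, ← sq, hm2]
  -- the key computation rules for the lifted map
  have key1 : ∀ (w : Circle) (a : Spin),
      stabHom Spin m hmc hm2 ⟨(w, w, a), Or.inl rfl⟩ = (w ^ 2, a) := by
    intro w a
    apply Prod.ext
    · rfl
    · show dmap Spin m (w * w⁻¹) * a = a
      rw [mul_inv_cancel, dmap_one, one_mul]
  have key2 : ∀ (w : Circle) (a : Spin),
      stabHom Spin m hmc hm2 ⟨(negOne * w, w, a), Or.inr rfl⟩ = (w ^ 2, m * a) := by
    intro w a
    apply Prod.ext
    · rfl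
    · show dmap Spin m (negOne * w * w⁻¹) * a = m * a
      rw [mul_assoc, mul_inv_cancel, mul_one, dmap_negOne]
  have hkermem : ∀ x : ↥(pmSubgroup Spin), stabHom Spin m hmc hm2 x = 1 →
      x ∈ Subgroup.normalClosure
        {(⟨(negOne, negOne, 1), Or.inl rfl⟩ : ↥(pmSubgroup Spin)),
         (⟨(negOne, 1, m), Or.inr (by rw [mul_one])⟩ : ↥(pmSubgroup Spin))} := by
    rintro ⟨⟨z, w, a⟩, hx⟩ h
    have hx' : z = w ∨ z = negOne * w := hx
    have h1 : w ^ 2 = 1 := congrArg Prod.fst h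
    have h2 : dmap Spin m (z * w⁻¹) * a = 1 := congrArg Prod.snd h
    obtain hw | hw := circle_sq_eq_one h1 <;> obtain rfl | rfl := hx' <;> subst hw
    · -- (1, 1, a)  with a = 1 : identity element
      rw [mul_inv_cancel, dmap_one, one_mul] at h2
      subst h2
      exact Subgroup.one_mem _
    · -- (negOne, 1, a) with m * a = 1, so a = m : second generator
      rw [mul_one, inv_one, mul_one, dmap_negOne] at h2
      have ha : a = m := by
        rw [← hminv, eq_comm, inv_eq_iff_mul_eq_one, h2]
      have hx2 : (⟨(negOne * 1, 1, a), hx⟩ : ↥(pmSubgroup Spin)) =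
          ⟨(negOne, 1, m), Or.inr (by rw [mul_one])⟩ :=
        Subtype.ext (show (negOne * 1, (1 : Circle), a) = (negOne, 1, m) by
          rw [mul_one, ha])
      rw [hx2]
      exact Subgroup.subset_normalClosure (Or.inr rfl)
    · -- (negOne, negOne, a) with a = 1 : first generator
      rw [mul_inv_cancel, dmap_one, one_mul] at h2
      subst h2
      exact Subgroup.subset_normalClosure (Or.inl rfl)
    · -- (1, negOne, a) with m * a = 1 : product of the two generators
      rw [negOne_inv, negOne_mul_negOne, one_mul, dmap_negOne] at h2
      have ha : a = m := by
        rw [← hminv, eq_comm, inv_eq_iff_mul_eq_one, h2]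
      have hx2 : (⟨(negOne * negOne, negOne, a), hx⟩ : ↥(pmSubgroup Spin)) =
          (⟨(negOne, negOne, 1), Or.inl rfl⟩ : ↥(pmSubgroup Spin)) *
          (⟨(negOne, 1, m), Or.inr (by rw [mul_one])⟩ : ↥(pmSubgroup Spin)) :=
        Subtype.ext (show (negOne * negOne, negOne, a)
            = (negOne * negOne, negOne * 1, 1 * m) by
          rw [mul_one, one_mul, ha])
      rw [hx2]
      exact Subgroup.mul_mem _
        (Subgroup.subset_normalClosure (Or.inl rfl))
        (Subgroup.subset_normalClosure (Or.inr rfl))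
  refine ⟨QuotientGroup.lift _ (stabHom Spin m hmc hm2) hker, ?_, ?_, ?_, ?_⟩
  · intro w a
    rw [QuotientGroup.lift_mk, key1]
  · intro w a
    rw [QuotientGroup.lift_mk, key2]
  · -- injective
    intro x y
    refine QuotientGroup.induction_on x fun a => QuotientGroup.induction_on y fun b hab => ?_
    rw [QuotientGroup.eq]
    apply hkermem
    rw [QuotientGroup.lift_mk, QuotientGroup.lift_mk] at hab
    rw [map_mul, map_inv, hab, inv_mul_cancel]
  · -- surjective
    rintro ⟨u, a⟩
    refine ⟨QuotientGroup.mk ⟨(Circle.exp (Complex.arg u / 2),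
      Circle.exp (Complex.arg u / 2), a), Or.inl rfl⟩, ?_⟩
    rw [QuotientGroup.lift_mk, key1, sq, ← Circle.exp_add, add_halves, Circle.exp_arg]
end
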